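/- arXiv:1501.01147 — 4 statements merged into one kernel-verified Lean document; each statement's English description precedes it below -/
import Mathlib

section
/- Let X be a finite set and ≤ a partial order on X. Then there exists a map f : X → (Fin 3 → ℝ) with x ≤ y if and only if f x i ≤ f y i for all i (i.e., the order has dimension at most 3), if and only if there exist affinely independent points A, B, C ∈ ℝ² together with maps c : X → ℝ² and r : X → ℝ with r x > 0 for all x such that, writing T(x) = {c x + r x • p : p ∈ convexHull {A, B, C}}, one has x ≤ y if and only if T(x) ⊆ T(y). That is, a finite partial order has dimension at most 3 if and only if it is isomorphic to the containment order of a family of positive homothets of a fixed triangle in the plane. -/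
/-- The standard triangle as an intersection of halfplanes. -/
lemma tri_hull : convexHull ℝ ({![0,0], ![1,0], ![0,1]} : Set (Fin 2 → ℝ)) =
    {p : Fin 2 → ℝ | 0 ≤ p 0 ∧ 0 ≤ p 1 ∧ p 0 + p 1 ≤ 1} := by
  apply le_antisymm
  · apply convexHull_min
    · rintro p (rfl | rfl | rfl) <;> norm_num
    · intro p hp q hq a b ha hb hab
      simp only [Set.mem_setOf_eq, Pi.add_apply, Pi.smul_apply, smul_eq_mul] at *
      refine ⟨by nlinarith [hp.1, hq.1], by nlinarith [hp.2.1, hq.2.1],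
        by nlinarith [hp.2.2, hq.2.2]⟩
  · rintro p ⟨h0, h1, hs⟩
    have hmem : ∀ i : Fin 3, (![![0,0], ![1,0], ![0,1]] : Fin 3 → Fin 2 → ℝ) i ∈
        ({![0,0], ![1,0], ![0,1]} : Set (Fin 2 → ℝ)) := by
      intro i; fin_cases i <;> simp
    have h := Finset.centerMass_mem_convexHull (Finset.univ : Finset (Fin 3))
      (w := ![1 - p 0 - p 1, p 0, p 1]) (z := ![![0,0], ![1,0], ![0,1]])
      (by intro i _; fin_cases i <;> simp <;> linarith)
      (by simp [Fin.sum_univ_three]; linarith) (fun i _ => hmem i)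
    have hw : ∑ i : Fin 3, (![1 - p 0 - p 1, p 0, p 1] : Fin 3 → ℝ) i = 1 := by
      simp [Fin.sum_univ_three]; ring
    rw [Finset.centerMass_eq_of_sum_1 _ _ hw] at h
    convert h using 1
    funext i
    fin_cases i <;> simp [Fin.sum_univ_three]

lemma tri_img (c : Fin 2 → ℝ) {r : ℝ} (hr : 0 < r) :
    (fun p => c + r • p) '' {p : Fin 2 → ℝ | 0 ≤ p 0 ∧ 0 ≤ p 1 ∧ p 0 + p 1 ≤ 1} =
    {q : Fin 2 → ℝ | c 0 ≤ q 0 ∧ c 1 ≤ q 1 ∧ q 0 + q 1 ≤ c 0 + c 1 + r} := by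
  ext q
  constructor
  · rintro ⟨p, ⟨h0, h1, hs⟩, rfl⟩
    simp only [Set.mem_setOf_eq, Pi.add_apply, Pi.smul_apply, smul_eq_mul]
    refine ⟨by nlinarith, by nlinarith, by nlinarith⟩
  · rintro ⟨h0, h1, hs⟩
    have hinv : (0:ℝ) ≤ r⁻¹ := (inv_pos.mpr hr).le
    have hc : r⁻¹ * r = 1 := inv_mul_cancel₀ hr.ne'
    refine ⟨r⁻¹ • (q - c), ⟨?_, ?_, ?_⟩, ?_⟩
    · simp only [Pi.smul_apply, Pi.sub_apply, smul_eq_mul]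
      exact mul_nonneg hinv (by linarith)
    · simp only [Pi.smul_apply, Pi.sub_apply, smul_eq_mul]
      exact mul_nonneg hinv (by linarith)
    · simp only [Pi.smul_apply, Pi.sub_apply, smul_eq_mul]
      nlinarith
    · simp only
      rw [smul_smul, mul_inv_cancel₀ hr.ne', one_smul, add_sub_cancel]

lemma tri_contain {cx cy : Fin 2 → ℝ} {rx ry : ℝ} (hrx : 0 < rx) (hry : 0 < ry) :
    ((fun p => cx + rx • p) '' {p : Fin 2 → ℝ | 0 ≤ p 0 ∧ 0 ≤ p 1 ∧ p 0 + p 1 ≤ 1} ⊆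
      (fun p => cy + ry • p) '' {p : Fin 2 → ℝ | 0 ≤ p 0 ∧ 0 ≤ p 1 ∧ p 0 + p 1 ≤ 1}) ↔
      (cy 0 ≤ cx 0 ∧ cy 1 ≤ cx 1 ∧ cx 0 + cx 1 + rx ≤ cy 0 + cy 1 + ry) := by
  rw [tri_img _ hrx, tri_img _ hry]
  constructor
  · intro h
    have h1 := h (show cx ∈ _ from ⟨le_refl _, le_refl _, by linarith⟩)
    have h2 := h (show ![cx 0 + rx, cx 1] ∈ _ by
      refine ⟨?_, ?_, ?_⟩ <;> simp <;> linarith)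
    simp only [Set.mem_setOf_eq, Matrix.cons_val_zero, Matrix.cons_val_one,
      Matrix.head_cons] at h1 h2
    exact ⟨h1.1, h1.2.1, by linarith [h2.2.2]⟩
  · rintro ⟨h1, h2, h3⟩ q ⟨g0, g1, gs⟩
    exact ⟨by linarith, by linarith, by linarith⟩

lemma tri_affInd : AffineIndependent ℝ ![![(0:ℝ),0], ![1,0], ![0,1]] := by
  classical
  rw [affineIndependent_iff]
  intro s w hw hwp e he
  set W : Fin 3 → ℝ := fun i => if i ∈ s then w i else 0 with hWdef
  have hsum : ∑ i : Fin 3, W i = 0 := by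
    rw [hWdef]; rw [Finset.sum_ite_mem, Finset.univ_inter]; exact hw
  have hvec : ∑ i : Fin 3, W i • (![![(0:ℝ),0], ![1,0], ![0,1]]) i = 0 := by
    simp only [hWdef, ite_smul, zero_smul]
    rw [Finset.sum_ite_mem, Finset.univ_inter]; exact hwp
  rw [Fin.sum_univ_three] at hsum hvec
  have h0 := congr_fun hvec 0
  have h1 := congr_fun hvec 1
  norm_num [Matrix.cons_val_two, Matrix.tail_cons] at h0 h1
  have hWe : w e = W e := by simp [hWdef, he]
  rw [hWe]
  fin_cases e
  · show W 0 = 0; linarith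
  · show W 1 = 0; linarith
  · show W 2 = 0; linarith

lemma linInd_of_affInd {A B C : Fin 2 → ℝ} (h : AffineIndependent ℝ ![A,B,C]) :
    LinearIndependent ℝ ![B - A, C - A] := by
  rw [LinearIndependent.pair_iff]
  intro s t hst
  have key := affineIndependent_iff.mp h Finset.univ ![-(s+t), s, t]
    (by simp [Fin.sum_univ_three]; try ring) ?_
  · constructor
    · have := key 1 (Finset.mem_univ _); simpa using this
    · have := key 2 (Finset.mem_univ _); simpa using this
  · rw [Fin.sum_univ_three]
    simp only [Matrix.cons_val_zero, Matrix.cons_val_one, Matrix.head_cons,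
      Matrix.cons_val_two, Matrix.tail_cons]
    have h2 : s • B - s • A + (t • C - t • A) = 0 := by
      rw [← smul_sub, ← smul_sub]; exact hst
    rw [neg_smul, add_smul]
    abel_nf
    abel_nf at h2
    linear_combination (norm := module) h2

/-- A finite partial order has dimension at most 3 if and only if it is
isomorphic to the containment order of a family of positive homothets of a
fixed triangle in the plane. -/
theorem dim_le_three_iff_triangleContainment {X : Type*} [Fintype X] [PartialOrder X] :
    (∃ f : X → (Fin 3 → ℝ), ∀ x y : X, x ≤ y ↔ ∀ i, f x i ≤ f y i) ↔
    (∃ A B C : Fin 2 → ℝ, AffineIndependent ℝ ![A, B, C] ∧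
      ∃ (c : X → (Fin 2 → ℝ)) (r : X → ℝ), (∀ x, 0 < r x) ∧
        ∀ x y : X, x ≤ y ↔
          (fun p => c x + r x • p) '' (convexHull ℝ {A, B, C}) ⊆
          (fun p => c y + r y • p) '' (convexHull ℝ {A, B, C})) := by
  constructor
  · rintro ⟨f, hf⟩
    set M : ℝ := 1 + ∑ z : X, |f z 0 + f z 1 + f z 2| with hM
    have hr : ∀ x : X, 0 < f x 0 + f x 1 + f x 2 + M := by
      intro x
      have h1 : |f x 0 + f x 1 + f x 2| ≤ ∑ z : X, |f z 0 + f z 1 + f z 2| :=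
        Finset.single_le_sum (f := fun z => |f z 0 + f z 1 + f z 2|) (fun z _ => abs_nonneg _) (Finset.mem_univ x)
      have h2 := neg_abs_le (f x 0 + f x 1 + f x 2)
      linarith
    refine ⟨![0,0], ![1,0], ![0,1], tri_affInd, fun x => ![-(f x 0), -(f x 1)],
      fun x => f x 0 + f x 1 + f x 2 + M, hr, fun x y => ?_⟩
    rw [tri_hull, hf x y, tri_contain (hr x) (hr y)]
    simp only [Matrix.cons_val_zero, Matrix.cons_val_one, Matrix.head_cons]
    constructor
    · intro h
      exact ⟨by linarith [h 0], by linarith [h 1], by linarith [h 2]⟩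
    · rintro ⟨h1, h2, h3⟩ i
      fin_cases i
      · show f x 0 ≤ f y 0; linarith
      · show f x 1 ≤ f y 1; linarith
      · show f x 2 ≤ f y 2; linarith
  · rintro ⟨A, B, C, hABC, c, r, hr, hcr⟩
    have hli := linInd_of_affInd hABC
    have hcard : Fintype.card (Fin 2) = Module.finrank ℝ (Fin 2 → ℝ) := by simp
    let b : Module.Basis (Fin 2) ℝ (Fin 2 → ℝ) := basisOfLinearIndependentOfCardEqFinrank hli hcard
    let E : (Fin 2 → ℝ) ≃ₗ[ℝ] (Fin 2 → ℝ) := b.equivFun.symm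
    have hEapply : ∀ z : Fin 2 → ℝ, E z = z 0 • (B - A) + z 1 • (C - A) := by
      intro z
      show b.equivFun.symm z = _
      rw [Module.Basis.equivFun_symm_apply, Fin.sum_univ_two]
      have hbco : ⇑b = ![B - A, C - A] := coe_basisOfLinearIndependentOfCardEqFinrank hli hcard
      rw [hbco]
      simp
    let φ : (Fin 2 → ℝ) →ᵃ[ℝ] (Fin 2 → ℝ) :=
      (AffineEquiv.constVAdd ℝ (Fin 2 → ℝ) A).toAffineMap.comp E.toLinearMap.toAffineMap
    have hφ : ∀ z, φ z = A + E z := by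
      intro z
      simp [φ, vadd_eq_add]
    have hhull : convexHull ℝ ({A, B, C} : Set (Fin 2 → ℝ)) =
        (fun z => A + E z) '' convexHull ℝ ({![0,0], ![1,0], ![0,1]} : Set (Fin 2 → ℝ)) := by
      have himg := AffineMap.image_convexHull φ ({![0,0], ![1,0], ![0,1]} : Set (Fin 2 → ℝ))
      have hφ0 : φ ![0,0] = A := by rw [hφ, hEapply]; simp
      have hφ1 : φ ![1,0] = B := by rw [hφ, hEapply]; simp
      have hφ2 : φ ![0,1] = C := by rw [hφ, hEapply]; simp
      have h1 : φ '' {![0,0], ![1,0], ![0,1]} = {A, B, C} := by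
        rw [Set.image_insert_eq, Set.image_insert_eq, Set.image_singleton, hφ0, hφ1, hφ2]
      rw [← h1, ← himg]
      exact (Set.image_congr fun z _ => hφ z).symm
    have key : ∀ x : X, (fun p => c x + r x • p) '' convexHull ℝ ({A,B,C} : Set (Fin 2 → ℝ)) =
        (fun z => A + E z) '' ((fun q => E.symm (c x + r x • A - A) + r x • q) ''
          convexHull ℝ ({![0,0], ![1,0], ![0,1]} : Set (Fin 2 → ℝ))) := by
      intro x
      rw [hhull, ← Set.image_comp, ← Set.image_comp]
      apply Set.image_congr
      intro z _
      simp only [Function.comp_apply]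
      rw [map_add, LinearEquiv.apply_symm_apply, map_smul, smul_add]
      abel
    have hinj : Function.Injective (fun z : Fin 2 → ℝ => A + E z) :=
      fun a b hab => E.injective (add_left_cancel hab)
    refine ⟨fun x => ![-(E.symm (c x + r x • A - A) 0), -(E.symm (c x + r x • A - A) 1),
      E.symm (c x + r x • A - A) 0 + E.symm (c x + r x • A - A) 1 + r x], fun x y => ?_⟩
    rw [hcr x y, key x, key y, Set.image_subset_image_iff hinj, tri_hull,
      tri_contain (hr x) (hr y)]
    set u := E.symm (c x + r x • A - A) with hu
    set v := E.symm (c y + r y • A - A) with hv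
    constructor
    · rintro ⟨h1, h2, h3⟩ i
      fin_cases i
      · show -(u 0) ≤ -(v 0); linarith
      · show -(u 1) ≤ -(v 1); linarith
      · show u 0 + u 1 + r x ≤ v 0 + v 1 + r y; linarith
    · intro h
      have g0 := h 0
      have g1 := h 1
      have g2 := h 2
      simp only [Matrix.cons_val_zero, Matrix.cons_val_one, Matrix.head_cons] at g0 g1
      have g2' : u 0 + u 1 + r x ≤ v 0 + v 1 + r y := g2
      exact ⟨by linarith, by linarith, g2'⟩
end

section
/- Let A, B, C ∈ ℝ² be affinely independent with A + B + C = 0, and set T = convexHull {A, B, C}. Let c_u, c_v, c_x, c_y ∈ ℝ² and r_u, r_v, r_x, r_y > 0, and for each w ∈ {u, v, x, y} write T_w = {c_w + r_w • p : p ∈ T}. Suppose T_u ⊆ T_v, T_x ⊆ T_y, T_x ⊄ T_v, and T_u ⊄ T_y. Then the segment [c_u, c_v] and the segment [c_x, c_y] are disjoint. -/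
/-! Auxiliary barycentric-coordinate machinery for the disjoint paths lemma. -/

/-- First coordinate of `p` in the basis `A, B` of `ℝ²`. -/
noncomputable def lA (A B p : Fin 2 → ℝ) : ℝ :=
  (p 0 * B 1 - p 1 * B 0) / (A 0 * B 1 - A 1 * B 0)

/-- Second coordinate of `p` in the basis `A, B` of `ℝ²`. -/
noncomputable def lB (A B p : Fin 2 → ℝ) : ℝ :=
  (p 1 * A 0 - p 0 * A 1) / (A 0 * B 1 - A 1 * B 0)

/-- The linear parts of the three barycentric coordinates with respect to the
triangle `A`, `B`, `C = -A - B`. -/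
noncomputable def bfun (A B : Fin 2 → ℝ) : Fin 3 → (Fin 2 → ℝ) → ℝ :=
  ![fun p => (2 * lA A B p - lB A B p) / 3,
    fun p => (2 * lB A B p - lA A B p) / 3,
    fun p => (-(lA A B p) - lB A B p) / 3]

lemma bfun_add (A B : Fin 2 → ℝ) (i : Fin 3) (u v : Fin 2 → ℝ) :
    bfun A B i (u + v) = bfun A B i u + bfun A B i v := by
  fin_cases i <;> simp [bfun, lA, lB] <;> ring

lemma bfun_smul (A B : Fin 2 → ℝ) (i : Fin 3) (a : ℝ) (u : Fin 2 → ℝ) :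
    bfun A B i (a • u) = a * bfun A B i u := by
  fin_cases i <;> simp [bfun, lA, lB] <;> ring

lemma bfun_vertex (A B C : Fin 2 → ℝ) (hD : A 0 * B 1 - A 1 * B 0 ≠ 0)
    (hC : C = -A - B) (i j : Fin 3) :
    bfun A B i (![A, B, C] j) = if i = j then 2/3 else -(1/3) := by
  subst hC
  have h1 : B 1 * A 0 - B 0 * A 1 ≠ 0 := by intro h; apply hD; linarith
  have h2 : -(B 0 * A 1) + B 1 * A 0 ≠ 0 := by intro h; apply hD; linarith
  have h3 : A 0 * B 1 - B 0 * A 1 ≠ 0 := by intro h; apply hD; linarith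
  have h4 : -(A 1 * B 0) + B 1 * A 0 ≠ 0 := by intro h; apply hD; linarith
  have h5 : B 1 * A 0 - A 1 * B 0 ≠ 0 := by intro h; apply hD; linarith
  have h6 : A 1 * B 0 - B 1 * A 0 ≠ 0 := by intro h; apply hD; linarith
  have h7 : B 1 * A 0 + -(A 1 * B 0) ≠ 0 := by intro h; apply hD; linarith
  fin_cases i <;> fin_cases j <;>
    simp [bfun, lA, lB] <;> field_simp <;> ring

lemma rep_eq (A B : Fin 2 → ℝ) (hD : A 0 * B 1 - A 1 * B 0 ≠ 0) (p : Fin 2 → ℝ) :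
    p = lA A B p • A + lB A B p • B := by
  funext i
  have h1 : B 1 * A 0 - B 0 * A 1 ≠ 0 := by intro h; apply hD; linarith
  have h2 : -(B 0 * A 1) + B 1 * A 0 ≠ 0 := by intro h; apply hD; linarith
  have h3 : A 0 * B 1 - B 0 * A 1 ≠ 0 := by intro h; apply hD; linarith
  have h4 : -(A 1 * B 0) + B 1 * A 0 ≠ 0 := by intro h; apply hD; linarith
  fin_cases i <;> simp [lA, lB] <;> field_simp <;> ring

/-- The triangle is exactly the set where all three barycentric coordinates
`1/3 + bfun i` are nonnegative. -/
lemma mem_hull_iff (A B C : Fin 2 → ℝ) (hD : A 0 * B 1 - A 1 * B 0 ≠ 0)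
    (hC : C = -A - B) (p : Fin 2 → ℝ) :
    p ∈ convexHull ℝ ({A, B, C} : Set (Fin 2 → ℝ)) ↔ ∀ i, -(1/3) ≤ bfun A B i p := by
  constructor
  · intro hp i
    have hconv : Convex ℝ {q : Fin 2 → ℝ | -(1/3) ≤ bfun A B i q} := by
      intro u hu v hv s t hs ht hst
      have e : bfun A B i (s • u + t • v) = s * bfun A B i u + t * bfun A B i v := by
        rw [bfun_add, bfun_smul, bfun_smul]
      simp only [Set.mem_setOf_eq] at hu hv ⊢
      rw [e]; nlinarith
    have hsubset : ({A, B, C} : Set (Fin 2 → ℝ)) ⊆ {q | -(1/3) ≤ bfun A B i q} := by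
      rintro q (hq | hq | hq) <;> simp only [Set.mem_setOf_eq] <;> rw [hq]
      · have := bfun_vertex A B C hD hC i 0
        simp at this; rw [this]; split <;> norm_num
      · have := bfun_vertex A B C hD hC i 1
        simp at this; rw [this]; split <;> norm_num
      · have := bfun_vertex A B C hD hC i 2
        simp at this; rw [this]; split <;> norm_num
    exact convexHull_min hsubset hconv hp
  · intro h
    set a := 1/3 + bfun A B 0 p with ha
    set b := 1/3 + bfun A B 1 p with hb
    set c := 1/3 + bfun A B 2 p with hcdef
    have key : p = a • A + b • B + c • C := by
      have h2 : a • A + b • B + c • C = lA A B p • A + lB A B p • B := by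
        subst hC
        have e0 : a = 1/3 + (2 * lA A B p - lB A B p) / 3 := by rw [ha]; rfl
        have e1 : b = 1/3 + (2 * lB A B p - lA A B p) / 3 := by rw [hb]; rfl
        have e2 : c = 1/3 + (-(lA A B p) - lB A B p) / 3 := by rw [hcdef]; rfl
        rw [e0, e1, e2]
        funext i
        simp [Pi.add_apply, Pi.smul_apply, Pi.sub_apply, Pi.neg_apply, smul_eq_mul]
        ring
      rw [h2]; exact rep_eq A B hD p
    have hsum : a + b + c = 1 := by
      rw [ha, hb, hcdef]
      show 1/3 + (2 * lA A B p - lB A B p) / 3 + (1/3 + (2 * lB A B p - lA A B p) / 3)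
          + (1/3 + (-(lA A B p) - lB A B p) / 3) = 1
      ring
    have h0a : 0 ≤ a := by have := h 0; rw [ha]; linarith
    have h0b : 0 ≤ b := by have := h 1; rw [hb]; linarith
    have h0c : 0 ≤ c := by have := h 2; rw [hcdef]; linarith
    have := (convex_convexHull ℝ ({A, B, C} : Set (Fin 2 → ℝ))).sum_mem
      (t := Finset.univ) (w := ![a, b, c]) (z := ![A, B, C])
      (by intro i _; fin_cases i <;> simpa)
      (by rw [Fin.sum_univ_three]; simpa using hsum)
      (by intro i _; fin_cases i <;> exact subset_convexHull ℝ _ (by simp))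
    rw [Fin.sum_univ_three] at this
    simpa [← key] using this

/-- If one homothet is contained in another, then the corresponding "support value"
`L c - r/3` of the big one is at most the one of the small one. -/
lemma phi_le_of_subset (T : Set (Fin 2 → ℝ)) (L : (Fin 2 → ℝ) → ℝ)
    (hadd : ∀ u v, L (u + v) = L u + L v)
    (hsmul : ∀ (a : ℝ) (u : Fin 2 → ℝ), L (a • u) = a * L u)
    (hmin : ∀ p ∈ T, -(1/3) ≤ L p)
    (V : Fin 2 → ℝ) (hV : V ∈ T) (hLV : L V = -(1/3))
    {c c' : Fin 2 → ℝ} {r r' : ℝ} (hr' : 0 < r')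
    (h : (fun p => c + r • p) '' T ⊆ (fun p => c' + r' • p) '' T) :
    L c' - r'/3 ≤ L c - r/3 := by
  obtain ⟨q, hq, hqe⟩ := h (Set.mem_image_of_mem _ hV)
  have h1 := congrArg L hqe
  simp only [hadd, hsmul] at h1
  have h2 := hmin q hq
  have h3 : r' * (-(1/3)) ≤ r' * L q := mul_le_mul_of_nonneg_left h2 hr'.le
  rw [hLV] at h1
  nlinarith

/-- Conversely, the three support inequalities imply containment of homothets. -/
lemma subset_of_phi (T : Set (Fin 2 → ℝ)) (L : Fin 3 → (Fin 2 → ℝ) → ℝ)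
    (hadd : ∀ i (u v : Fin 2 → ℝ), L i (u + v) = L i u + L i v)
    (hsmul : ∀ i (a : ℝ) (u : Fin 2 → ℝ), L i (a • u) = a * L i u)
    (hmem : ∀ p, p ∈ T ↔ ∀ i, -(1/3) ≤ L i p)
    {c c' : Fin 2 → ℝ} {r r' : ℝ} (hr : 0 ≤ r) (hr' : 0 < r')
    (hφ : ∀ i, L i c' - r'/3 ≤ L i c - r/3) :
    (fun p => c + r • p) '' T ⊆ (fun p => c' + r' • p) '' T := by
  have hsub : ∀ i (u v : Fin 2 → ℝ), L i (u - v) = L i u - L i v := by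
    intro i u v
    have h := hadd i (u - v) v
    rw [sub_add_cancel] at h
    linarith
  rintro x ⟨p, hp, rfl⟩
  refine ⟨r'⁻¹ • (c + r • p - c'), ?_, ?_⟩
  · rw [hmem]
    intro i
    have hLp := (hmem p).mp hp i
    have e : L i (r'⁻¹ • (c + r • p - c')) = r'⁻¹ * (L i c + r * L i p - L i c') := by
      rw [hsmul, hsub, hadd, hsmul]
    rw [e]
    have h1 : r * (-(1/3)) ≤ r * L i p := mul_le_mul_of_nonneg_left hLp hr
    have h2 : -(r'/3) ≤ L i c + r * L i p - L i c' := by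
      have := hφ i; nlinarith
    have h3 : r'⁻¹ * (-(r'/3)) ≤ r'⁻¹ * (L i c + r * L i p - L i c') :=
      mul_le_mul_of_nonneg_left h2 (inv_nonneg.mpr hr'.le)
    have h4 : r'⁻¹ * (-(r'/3)) = -(1/3) := by field_simp
    linarith
  · show c' + r' • (r'⁻¹ • (c + r • p - c')) = c + r • p
    rw [smul_smul, mul_inv_cancel₀ hr'.ne', one_smul]
    abel

lemma interp_le_left {u v s t : ℝ} (h : v ≤ u) (ht : 0 ≤ t) (hst : s + t = 1) :
    s * u + t * v ≤ u := by
  have hs : s = 1 - t := by linarith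
  subst hs
  nlinarith [mul_nonneg ht (sub_nonneg.mpr h)]

lemma interp_ge_right {u v s t : ℝ} (h : v ≤ u) (hs : 0 ≤ s) (hst : s + t = 1) :
    v ≤ s * u + t * v := by
  have ht : t = 1 - s := by linarith
  subst ht
  nlinarith [mul_nonneg hs (sub_nonneg.mpr h)]

/-- Disjoint paths lemma: in the barycenter drawing of a triangle containment
representation, strongly independent edges do not cross. Here the triangle
`T = convexHull {A, B, C}` has barycenter at the origin (`A + B + C = 0`), so
the barycenter of the homothet `{c + r • p : p ∈ T}` is `c`. -/
theorem disjoint_segments_of_strongly_independent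
    (A B C : Fin 2 → ℝ) (hABC : AffineIndependent ℝ ![A, B, C])
    (hbary : A + B + C = 0)
    (cu cv cx cy : Fin 2 → ℝ) (ru rv rx ry : ℝ)
    (hru : 0 < ru) (hrv : 0 < rv) (hrx : 0 < rx) (hry : 0 < ry)
    (huv : (fun p => cu + ru • p) '' (convexHull ℝ {A, B, C}) ⊆
           (fun p => cv + rv • p) '' (convexHull ℝ {A, B, C}))
    (hxy : (fun p => cx + rx • p) '' (convexHull ℝ {A, B, C}) ⊆
           (fun p => cy + ry • p) '' (convexHull ℝ {A, B, C}))
    (hxv : ¬ ((fun p => cx + rx • p) '' (convexHull ℝ {A, B, C}) ⊆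
              (fun p => cv + rv • p) '' (convexHull ℝ {A, B, C})))
    (huy : ¬ ((fun p => cu + ru • p) '' (convexHull ℝ {A, B, C}) ⊆
              (fun p => cy + ry • p) '' (convexHull ℝ {A, B, C}))) :
    Disjoint (segment ℝ cu cv) (segment ℝ cx cy) := by
  -- C in terms of A and B
  have hC : C = -A - B := by
    funext i
    have h := congrFun hbary i
    simp only [Pi.add_apply, Pi.zero_apply] at h
    simp only [Pi.sub_apply, Pi.neg_apply]
    linarith
  -- linear independence of A and B
  have hpair : ∀ a b : ℝ, a • A + b • B = 0 → a = 0 ∧ b = 0 := by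
    intro a b hab
    have h3 := affineIndependent_iff.mp hABC Finset.univ
      ![a - (a + b)/3, b - (a + b)/3, -((a + b)/3)]
      (by simp [Fin.sum_univ_three]; ring)
      (by
        rw [Fin.sum_univ_three]
        simp only [Matrix.cons_val_zero, Matrix.cons_val_one, Matrix.head_cons,
          Matrix.cons_val_two, Matrix.tail_cons]
        funext i
        have h1 := congrFun hab i
        have h2 := congrFun hbary i
        simp only [Pi.add_apply, Pi.smul_apply, Pi.zero_apply, smul_eq_mul] at h1 h2 ⊢
        linear_combination h1 - ((a + b)/3) * h2)
    have e0 := h3 0 (Finset.mem_univ _)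
    have e1 := h3 1 (Finset.mem_univ _)
    have e2 := h3 2 (Finset.mem_univ _)
    simp only [Matrix.cons_val_zero, Matrix.cons_val_one, Matrix.head_cons,
      Matrix.cons_val_two, Matrix.tail_cons] at e0 e1 e2
    constructor <;> linarith
  have hkey : ∀ a b : ℝ, a * A 0 + b * B 0 = 0 → a * A 1 + b * B 1 = 0 → a = 0 ∧ b = 0 := by
    intro a b h0 h1
    refine hpair a b ?_
    funext i
    fin_cases i <;>
      simp only [Pi.add_apply, Pi.smul_apply, Pi.zero_apply, smul_eq_mul]
    · exact h0
    · exact h1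
  -- the determinant of (A, B) is nonzero
  have hD : A 0 * B 1 - A 1 * B 0 ≠ 0 := by
    intro hD0
    by_cases h1 : A 1 = 0 ∧ B 1 = 0
    · by_cases h0 : A 0 = 0 ∧ B 0 = 0
      · have := hkey 1 0 (by rw [h0.1]; ring) (by rw [h1.1]; ring)
        exact one_ne_zero this.1
      · have := hkey (B 0) (-(A 0)) (by ring) (by rw [h1.1, h1.2]; ring)
        push_neg at h0
        rcases eq_or_ne (A 0) 0 with hA0 | hA0
        · exact h0 hA0 this.1
        · exact hA0 (by linarith [this.2])
    · have := hkey (B 1) (-(A 1)) (by linarith) (by ring)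
      push_neg at h1
      rcases eq_or_ne (A 1) 0 with hA1 | hA1
      · exact h1 hA1 this.1
      · exact hA1 (by linarith [this.2])
  have hmem := mem_hull_iff A B C hD hC
  have hAmem : A ∈ convexHull ℝ ({A, B, C} : Set (Fin 2 → ℝ)) :=
    subset_convexHull ℝ _ (by simp)
  have hBmem : B ∈ convexHull ℝ ({A, B, C} : Set (Fin 2 → ℝ)) :=
    subset_convexHull ℝ _ (by simp)
  -- for each i, a vertex of the triangle where `bfun i` attains the minimum -1/3
  have hVmem : ∀ i : Fin 3, (![B, A, A] i) ∈ convexHull ℝ ({A, B, C} : Set (Fin 2 → ℝ)) := by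
    intro i; fin_cases i
    · exact hBmem
    · exact hAmem
    · exact hAmem
  have hVval : ∀ i : Fin 3, bfun A B i (![B, A, A] i) = -(1/3) := by
    intro i; fin_cases i
    · have := bfun_vertex A B C hD hC 0 1; simpa using this
    · have := bfun_vertex A B C hD hC 1 0; simpa using this
    · have := bfun_vertex A B C hD hC 2 0; simpa using this
  -- the six support inequalities from the two containments
  have key1 : ∀ i, bfun A B i cv - rv/3 ≤ bfun A B i cu - ru/3 := fun i =>
    phi_le_of_subset _ (bfun A B i) (bfun_add A B i) (bfun_smul A B i)
      (fun p hp => (hmem p).mp hp i) (![B, A, A] i) (hVmem i) (hVval i) hrv huv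
  have key2 : ∀ i, bfun A B i cy - ry/3 ≤ bfun A B i cx - rx/3 := fun i =>
    phi_le_of_subset _ (bfun A B i) (bfun_add A B i) (bfun_smul A B i)
      (fun p hp => (hmem p).mp hp i) (![B, A, A] i) (hVmem i) (hVval i) hry hxy
  -- suppose the segments meet
  by_contra hcon
  rw [Set.not_disjoint_iff] at hcon
  obtain ⟨z, hz1, hz2⟩ := hcon
  obtain ⟨su, sv, hsu, hsv, hs1, hze1⟩ := hz1
  obtain ⟨tx, ty, htx, hty, ht1, hze2⟩ := hz2
  have bz1 : ∀ i, bfun A B i z = su * bfun A B i cu + sv * bfun A B i cv := by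
    intro i; rw [← hze1, bfun_add, bfun_smul, bfun_smul]
  have bz2 : ∀ i, bfun A B i z = tx * bfun A B i cx + ty * bfun A B i cy := by
    intro i; rw [← hze2, bfun_add, bfun_smul, bfun_smul]
  rcases le_total (su * ru + sv * rv) (tx * rx + ty * ry) with hle | hle
  · -- then T_u ⊆ T_y, contradiction
    refine huy (subset_of_phi _ (bfun A B) (bfun_add A B) (bfun_smul A B) hmem hru.le hry ?_)
    intro i
    have q1 : bfun A B i z - (su * ru + sv * rv)/3
        = su * (bfun A B i cu - ru/3) + sv * (bfun A B i cv - rv/3) := by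
      rw [bz1 i]; ring
    have q2 : bfun A B i z - (tx * rx + ty * ry)/3
        = tx * (bfun A B i cx - rx/3) + ty * (bfun A B i cy - ry/3) := by
      rw [bz2 i]; ring
    have c1 := interp_le_left (key1 i) hsv hs1
    have c2 := interp_ge_right (key2 i) htx ht1
    linarith
  · -- then T_x ⊆ T_v, contradiction
    refine hxv (subset_of_phi _ (bfun A B) (bfun_add A B) (bfun_smul A B) hmem hrx.le hrv ?_)
    intro i
    have q1 : bfun A B i z - (su * ru + sv * rv)/3
        = su * (bfun A B i cu - ru/3) + sv * (bfun A B i cv - rv/3) := by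
      rw [bz1 i]; ring
    have q2 : bfun A B i z - (tx * rx + ty * ry)/3
        = tx * (bfun A B i cx - rx/3) + ty * (bfun A B i cy - ry/3) := by
      rw [bz2 i]; ring
    have c1 := interp_ge_right (key1 i) hsu hs1
    have c2 := interp_le_left (key2 i) hty ht1
    linarith
end

section
/- Let t ≥ 2, let c ∈ ℝ, and let u, v ∈ (Fin t → ℝ) satisfy Σᵢ u i ≥ c and Σᵢ v i ≥ c. For w ∈ {u, v} write Δ(w) = {p ∈ (Fin t → ℝ) : p ≤ w componentwise and Σᵢ p i = c}. Then Δ(u) ⊆ Δ(v) if and only if u ≤ v in the componentwise order. -/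
/-- Containment of the hyperplane slices of downward cones exactly captures
componentwise comparability of the cone apices: for apices in the positive
halfspace of `{p : Σᵢ p i = c}`, `Δ(u) ⊆ Δ(v)` iff `u ≤ v`. -/
theorem coneSlice_subset_iff_le
    (t : ℕ) (ht : 2 ≤ t) (c : ℝ) (u v : Fin t → ℝ)
    (hu : c ≤ ∑ i, u i) (hv : c ≤ ∑ i, v i) :
    ({p : Fin t → ℝ | p ≤ u ∧ (∑ i, p i) = c} ⊆
     {p : Fin t → ℝ | p ≤ v ∧ (∑ i, p i) = c}) ↔ u ≤ v := by
  constructor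
  · intro hsub i
    -- pick j ≠ i
    haveI : Nontrivial (Fin t) := Fin.nontrivial_iff_two_le.mpr ht
    obtain ⟨j, hj⟩ : ∃ j : Fin t, j ≠ i := exists_ne i
    set p : Fin t → ℝ := Function.update u j (u j - (∑ k, u k - c)) with hp
    have hpu : p ≤ u := by
      intro k
      by_cases hk : k = j
      · subst hk
        simp [hp, Function.update_self]
        linarith
      · simp [hp, Function.update_of_ne hk]
    have hpsum : (∑ k, p k) = c := by
      have h2 : ∑ k ∈ Finset.univ.erase j, u k + u j = ∑ k, u k :=
        Finset.sum_erase_add _ _ (Finset.mem_univ j)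
      rw [hp, Finset.sum_update_of_mem (Finset.mem_univ j),
        Finset.sdiff_singleton_eq_erase]
      linarith
    have := hsub ⟨hpu, hpsum⟩
    have hpi : p i = u i := by simp [hp, Function.update_of_ne (Ne.symm hj)]
    have := this.1 i
    rw [hpi] at this
    exact this
  · intro h p hp
    exact ⟨le_trans hp.1 h, hp.2⟩
end

section
/- Let t ≥ 2 and let ≤ be a partial order on a finite set X. Let X = X⁺ ∪ X⁻ be a partition (X⁺ ∩ X⁻ = ∅) such that X⁻ is a downset and X⁺ is an upset of the order. Fix c ∈ ℝ. Suppose there are maps a : X⁺ → (Fin t → ℝ), r : X⁺ → ℝ and b : X⁻ → (Fin t → ℝ), s : X⁻ → ℝ with r x > 0, (Σᵢ a x i) − r x = c for all x ∈ X⁺, and s y > 0, (Σᵢ b y i) + s y = c for all y ∈ X⁻, and write Δ(x) = {a x − r x • q : q ∈ stdSimplex ℝ (Fin t)} for x ∈ X⁺ and Δ*(y) = {b y + s y • q : q ∈ stdSimplex ℝ (Fin t)} for y ∈ X⁻. Assume: (i) for all x, x' ∈ X⁺, x ≤ x' iff Δ(x) ⊆ Δ(x'); (ii) for all y, y' ∈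 X⁻, y ≤ y' iff Δ*(y') ⊆ Δ*(y); (iii) for all x ∈ X⁺ and y ∈ X⁻, y ≤ x iff Δ(x) ∩ Δ*(y) ≠ ∅. Then there exists a map f : X → (Fin t → ℝ) such that for all z, z' ∈ X, z ≤ z' iff f z ≤ f z' componentwise (i.e., the dimension of the order is at most t). -/
open Finset in
lemma mem_img_pos {t : ℕ} (b : Fin t → ℝ) (s : ℝ) (hs : 0 < s) (p : Fin t → ℝ) :
    p ∈ (fun q => b + s • q) '' stdSimplex ℝ (Fin t) ↔
      (∀ i, b i ≤ p i) ∧ ∑ i, p i = (∑ i, b i) + s := by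
  constructor
  · rintro ⟨q, ⟨hq0, hq1⟩, rfl⟩
    constructor
    · intro i
      simp only [Pi.add_apply, Pi.smul_apply, smul_eq_mul]
      nlinarith [hq0 i]
    · simp only [Pi.add_apply, Pi.smul_apply, smul_eq_mul, Finset.sum_add_distrib,
        ← Finset.mul_sum, hq1, mul_one]
  · rintro ⟨hle, hsum⟩
    refine ⟨s⁻¹ • (p - b), ⟨fun i => ?_, ?_⟩, ?_⟩
    · simp only [Pi.smul_apply, Pi.sub_apply, smul_eq_mul]
      exact mul_nonneg (inv_nonneg.mpr hs.le) (by linarith [hle i])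
    · simp only [Pi.smul_apply, Pi.sub_apply, smul_eq_mul, ← Finset.mul_sum,
        Finset.sum_sub_distrib, hsum]
      field_simp
      ring
    · funext i
      simp only [Pi.add_apply, Pi.smul_apply, Pi.sub_apply, smul_eq_mul]
      field_simp
      ring

lemma mem_img_neg {t : ℕ} (a : Fin t → ℝ) (r : ℝ) (hr : 0 < r) (p : Fin t → ℝ) :
    p ∈ (fun q => a - r • q) '' stdSimplex ℝ (Fin t) ↔
      (∀ i, p i ≤ a i) ∧ ∑ i, p i = (∑ i, a i) - r := by
  constructor
  · rintro ⟨q, ⟨hq0, hq1⟩, rfl⟩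
    constructor
    · intro i
      simp only [Pi.sub_apply, Pi.smul_apply, smul_eq_mul]
      nlinarith [hq0 i]
    · simp only [Pi.sub_apply, Pi.smul_apply, smul_eq_mul, Finset.sum_sub_distrib,
        ← Finset.mul_sum, hq1, mul_one]
  · rintro ⟨hle, hsum⟩
    refine ⟨r⁻¹ • (a - p), ⟨fun i => ?_, ?_⟩, ?_⟩
    · simp only [Pi.smul_apply, Pi.sub_apply, smul_eq_mul]
      exact mul_nonneg (inv_nonneg.mpr hr.le) (by linarith [hle i])
    · simp only [Pi.smul_apply, Pi.sub_apply, smul_eq_mul, ← Finset.mul_sum,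
        Finset.sum_sub_distrib, hsum]
      field_simp
      ring
    · funext i
      simp only [Pi.sub_apply, Pi.smul_apply, smul_eq_mul]
      field_simp
      ring

/-- Certificate criterion for dimension at most `t`: if a finite partial order
is partitioned into an upset `X⁺` and a downset `X⁻`, the elements of `X⁺` are
represented by point-reflected homothets `Δ(x) = a x - r x • stdSimplex` and
the elements of `X⁻` by positive homothets `Δ*(y) = b y + s y • stdSimplex` of
the standard simplex, all lying in the hyperplane `{p : Σᵢ p i = c}`, such that
containment on `X⁺`, dual containment on `X⁻` and intersection across the
partition represent the order, then the order has dimension at most `t`. -/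
theorem dim_le_of_separated_simplices {X : Type*} [Fintype X] [PartialOrder X]
    (t : ℕ) (ht : 2 ≤ t) (Xp Xm : Set X)
    (hcover : Xp ∪ Xm = Set.univ) (hdisj : Xp ∩ Xm = ∅)
    (hdown : ∀ y y' : X, y' ≤ y → y ∈ Xm → y' ∈ Xm)
    (hup : ∀ x x' : X, x ≤ x' → x ∈ Xp → x' ∈ Xp)
    (c : ℝ)
    (a : X → (Fin t → ℝ)) (r : X → ℝ) (b : X → (Fin t → ℝ)) (s : X → ℝ)
    (hr : ∀ x ∈ Xp, 0 < r x) (ha : ∀ x ∈ Xp, (∑ i, a x i) - r x = c)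
    (hs : ∀ y ∈ Xm, 0 < s y) (hb : ∀ y ∈ Xm, (∑ i, b y i) + s y = c)
    (hplus : ∀ x ∈ Xp, ∀ x' ∈ Xp, x ≤ x' ↔
      (fun q => a x - r x • q) '' stdSimplex ℝ (Fin t) ⊆
      (fun q => a x' - r x' • q) '' stdSimplex ℝ (Fin t))
    (hminus : ∀ y ∈ Xm, ∀ y' ∈ Xm, y ≤ y' ↔
      (fun q => b y' + s y' • q) '' stdSimplex ℝ (Fin t) ⊆
      (fun q => b y + s y • q) '' stdSimplex ℝ (Fin t))
    (hcross : ∀ x ∈ Xp, ∀ y ∈ Xm, y ≤ x ↔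
      ((fun q => a x - r x • q) '' stdSimplex ℝ (Fin t) ∩
       (fun q => b y + s y • q) '' stdSimplex ℝ (Fin t)).Nonempty) :
    ∃ f : X → (Fin t → ℝ), ∀ z z' : X, z ≤ z' ↔ ∀ i, f z i ≤ f z' i := by
  classical
  haveI : Nontrivial (Fin t) := by
    refine ⟨⟨0, by omega⟩, ⟨1, by omega⟩, ?_⟩
    simp [Fin.ext_iff]
  have hmem : ∀ z : X, z ∉ Xp → z ∈ Xm := fun z hz => by
    have : z ∈ Xp ∪ Xm := hcover ▸ Set.mem_univ z
    exact this.resolve_left hz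
  have hnot : ∀ z : X, z ∈ Xp → z ∉ Xm := fun z hz hz' => by
    have : z ∈ Xp ∩ Xm := ⟨hz, hz'⟩
    rw [hdisj] at this; exact this
  -- key equivalences
  have key1 : ∀ x ∈ Xp, ∀ x' ∈ Xp, (x ≤ x' ↔ ∀ i, a x i ≤ a x' i) := by
    intro x hx x' hx'
    rw [hplus x hx x' hx']
    constructor
    · intro hsub j
      obtain ⟨i, hij⟩ := exists_ne j
      have hv : (a x - r x • (fun k => if i = k then (1:ℝ) else 0)) ∈
          (fun q => a x - r x • q) '' stdSimplex ℝ (Fin t) :=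
        ⟨_, ite_eq_mem_stdSimplex ℝ i, rfl⟩
      have h2 := ((mem_img_neg _ _ (hr x' hx') _).mp (hsub hv)).1 j
      simpa [hij] using h2
    · intro hle p hp
      rw [mem_img_neg _ _ (hr x hx) _] at hp
      rw [mem_img_neg _ _ (hr x' hx')]
      refine ⟨fun i => le_trans (hp.1 i) (hle i), ?_⟩
      have h1 := ha x hx; have h2 := ha x' hx'
      rw [hp.2]; linarith
  have key2 : ∀ y ∈ Xm, ∀ y' ∈ Xm, (y ≤ y' ↔ ∀ i, b y i ≤ b y' i) := by
    intro y hy y' hy'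
    rw [hminus y hy y' hy']
    constructor
    · intro hsub j
      obtain ⟨i, hij⟩ := exists_ne j
      have hv : (b y' + s y' • (fun k => if i = k then (1:ℝ) else 0)) ∈
          (fun q => b y' + s y' • q) '' stdSimplex ℝ (Fin t) :=
        ⟨_, ite_eq_mem_stdSimplex ℝ i, rfl⟩
      have h2 := ((mem_img_pos _ _ (hs y hy) _).mp (hsub hv)).1 j
      simpa [hij] using h2
    · intro hle p hp
      rw [mem_img_pos _ _ (hs y' hy') _] at hp
      rw [mem_img_pos _ _ (hs y hy)]
      refine ⟨fun i => le_trans (hle i) (hp.1 i), ?_⟩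
      have h1 := hb y hy; have h2 := hb y' hy'
      rw [hp.2]; linarith
  have key3 : ∀ x ∈ Xp, ∀ y ∈ Xm, (y ≤ x ↔ ∀ i, b y i ≤ a x i) := by
    intro x hx y hy
    rw [hcross x hx y hy]
    have hrx := hr x hx; have hsy := hs y hy
    have hax := ha x hx; have hby := hb y hy
    constructor
    · rintro ⟨p, hp1, hp2⟩ i
      rw [mem_img_neg _ _ hrx] at hp1
      rw [mem_img_pos _ _ hsy] at hp2
      exact le_trans (hp2.1 i) (hp1.1 i)
    · intro hle
      have hden : (0:ℝ) < r x + s y := by linarith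
      set θ : ℝ := s y / (r x + s y) with hθ
      have hθ0 : 0 ≤ θ := by positivity
      have hθ1 : θ ≤ 1 := by rw [hθ, div_le_one hden]; linarith
      have hθs : θ * (r x + s y) = s y := div_mul_cancel₀ _ hden.ne'
      have hsum : ∑ i, (b y + θ • (a x - b y)) i
          = (∑ i, b y i) + θ * ((∑ i, a x i) - ∑ i, b y i) := by
        simp only [Pi.add_apply, Pi.smul_apply, Pi.sub_apply, smul_eq_mul,
          Finset.sum_add_distrib, ← Finset.mul_sum, Finset.sum_sub_distrib]
      have hAB : (∑ i, a x i) - ∑ i, b y i = r x + s y := by linarith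
      refine ⟨b y + θ • (a x - b y), ?_, ?_⟩
      · rw [mem_img_neg _ _ hrx]
        constructor
        · intro i
          simp only [Pi.add_apply, Pi.smul_apply, Pi.sub_apply, smul_eq_mul]
          nlinarith [hle i]
        · rw [hsum, hAB, hθs]; linarith
      · rw [mem_img_pos _ _ hsy]
        constructor
        · intro i
          simp only [Pi.add_apply, Pi.smul_apply, Pi.sub_apply, smul_eq_mul]
          nlinarith [hle i]
        · rw [hsum, hAB, hθs]
  refine ⟨fun z => if z ∈ Xp then a z else b z, fun z z' => ?_⟩
  by_cases hz : z ∈ Xp <;> by_cases hz' : z' ∈ Xp <;>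
    simp only [if_pos, if_neg, hz, hz', if_true, if_false]
  · exact key1 z hz z' hz'
  · -- z ∈ Xp, z' ∈ Xm : both directions false
    have hz'm := hmem z' hz'
    constructor
    · intro h
      exact absurd (hup z z' h hz) hz'
    · intro h
      exfalso
      have h1 : ∑ i, a z i ≤ ∑ i, b z' i :=
        Finset.sum_le_sum (fun i _ => h i)
      have := ha z hz; have := hb z' hz'm
      have := hr z hz; have := hs z' hz'm
      linarith
  · exact key3 z' hz' z (hmem z hz)
  · exact key2 z (hmem z hz) z' (hmem z' hz')
end
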